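/- In a simple graph G, if a vertex v has no bad neighbours (i.e., no neighbour w of v has a vertex of degree d_w − 1 present in G), then the card G−v is ds-completable. -/
import Mathlib


open SimpleGraph Finset
open scoped Classical

variable {V : Type*}

/-- The degree of a vertex `u` in a simple graph `G`. -/
noncomputable def deg (G : SimpleGraph V) (u : V) : ℕ := (G.neighborSet u).ncard

/-- The degree of `u` in the card `G − v` (the vertex-deleted subgraph at `v`). -/
noncomputable def cardDeg (G : SimpleGraph V) (v u : V) : ℕ := (G.neighborSet u \ {v}).ncard

/-- The card `G − v` is ds-completable: for each degree `d`, the vertices of degree `d`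
in `G − v` are either all neighbours of `v` in `G` or all non-neighbours of `v` in `G`. -/
def DsCompletable (G : SimpleGraph V) (v : V) : Prop :=
  ∀ d : ℕ, (∀ u, u ≠ v → cardDeg G v u = d → G.Adj v u) ∨
           (∀ u, u ≠ v → cardDeg G v u = d → ¬ G.Adj v u)

/-- A vertex is bad if the graph contains a vertex of degree one less. -/
def Bad (G : SimpleGraph V) (v : V) : Prop := ∃ w, deg G w + 1 = deg G v

/-- A vertex is dull if the graph contains a vertex of degree one more. -/
def Dull (G : SimpleGraph V) (v : V) : Prop := ∃ w, deg G w = deg G v + 1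

/-- ε(s,t): the number of stubs on `s` used by edges from `s` to `t`
(for disjoint `s`, `t` this is the number of edges between them; for `s = t`
it is twice the number of edges inside `s`). -/
noncomputable def stubs (G : SimpleGraph V) (s t : Finset V) : ℕ :=
  ((s ×ˢ t).filter fun p => G.Adj p.1 p.2).card

/-- A vertex set is neighbourly if no vertex outside the set has a degree one less
than that of a vertex in the set. -/
def Neighbourly (G : SimpleGraph V) (K : Finset V) : Prop :=
  ∀ u ∉ K, ∀ w ∈ K, deg G u + 1 ≠ deg G w

/-- A vertex set is `d`-neighbourly if it contains a vertex `v` of degree `d` such that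
no vertex outside the set has a degree one less than that of any member other than `v`. -/
def DNeighbourly (G : SimpleGraph V) (d : ℕ) (K : Finset V) : Prop :=
  ∃ v ∈ K, deg G v = d ∧ ∀ u ∉ K, ∀ w ∈ K, w ≠ v → deg G u + 1 ≠ deg G w

/-- A vertex with no bad neighbours has a ds-completable card. -/
theorem stmt7 [Fintype V] (G : SimpleGraph V) (v : V)
    (h : ∀ w : V, G.Adj v w → ¬ Bad G w) : DsCompletable G v := by
  have key_adj : ∀ u, G.Adj v u → deg G u = cardDeg G v u + 1 := by
    intro u hadj
    have hv : v ∈ G.neighborSet u := hadj.symm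
    have := Set.ncard_diff_singleton_add_one hv (Set.toFinite _)
    simpa [deg, cardDeg] using this.symm
  have key_nadj : ∀ u, ¬ G.Adj v u → deg G u = cardDeg G v u := by
    intro u hna
    have hv : v ∉ G.neighborSet u := fun hmem => hna (G.adj_symm hmem)
    simp [deg, cardDeg, Set.diff_singleton_eq_self hv]
  intro d
  by_cases hex : ∃ u, u ≠ v ∧ cardDeg G v u = d ∧ G.Adj v u
  · left
    obtain ⟨u, hu, hdu, hadj⟩ := hex
    intro u' hu' hdu'
    by_contra hna
    exact h u hadj ⟨u', by rw [key_nadj u' hna, key_adj u hadj, hdu, hdu']⟩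
  · right
    intro u hu hdu hadj
    exact hex ⟨u, hu, hdu, hadj⟩
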